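/- Let δ : (0,1] → [0,∞) be measurable and suppose that for every γ > 0 there exists t ∈ (0, 1) arbitrarily small with ∫_t^1 δ(r)/r dr ≤ γ·log(1/t). Then for every δ₀ > 0, the set S = {r ∈ (0,1] : δ(r) > δ₀} has lower density zero at 0; that is, liminf_{γ→0⁺} |S ∩ [0,γ]|/γ = 0. -/

import Mathlib

open MeasureTheory Filter Topology Set

private lemma extremizer_core (δ : ℝ → ℝ) (hδmeas : Measurable δ)
    (hδnonneg : ∀ r ∈ Set.Ioc (0:ℝ) 1, 0 ≤ δ r)
    (hsmall : ∀ γ > (0:ℝ), ∀ ε > (0:ℝ), ∃ t, 0 < t ∧ t < 1 ∧ t < ε ∧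
      (∫⁻ r in Set.Ioc t 1, ENNReal.ofReal (δ r / r))
        ≤ ENNReal.ofReal (γ * Real.log (1 / t)))
    {δ₀ ε ε₀ : ℝ} (hδ₀ : 0 < δ₀) (hε0 : 0 < ε) (hε1 : ε < 1)
    (hε₀0 : 0 < ε₀) (hε₀1 : ε₀ ≤ 1) :
    ∃ γ, 0 < γ ∧ γ < ε₀ ∧
      (volume ({r ∈ Set.Ioc (0:ℝ) 1 | δ r > δ₀} ∩ Set.Icc 0 γ)).toReal / γ ≤ ε := by
  set S : Set ℝ := {r ∈ Set.Ioc (0:ℝ) 1 | δ r > δ₀} with hSdef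
  have hS : MeasurableSet S := measurableSet_Ioc.inter (hδmeas measurableSet_Ioi)
  have hSsub : S ⊆ Set.Ioc 0 1 := fun r hr => hr.1
  by_contra hcon
  push_neg at hcon
  -- hcon : ∀ γ, 0 < γ → γ < ε₀ → ε < _ / γ
  set q : ℝ := ε / 2 with hqdef
  have hq0 : 0 < q := by positivity
  have hq1 : q < 1 := by simp only [hqdef]; linarith
  set L : ℝ := Real.log (2 / ε) with hLdef
  have hL0 : 0 < L := Real.log_pos (by rw [lt_div_iff₀ hε0]; linarith)
  have hC0 : 0 ≤ Real.log (2 / ε₀) :=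
    Real.log_nonneg (by rw [le_div_iff₀ hε₀0]; linarith)
  set N : ℕ := ⌈Real.log (2 / ε₀) / (3 * L)⌉₊ + 1 with hNdef
  set c : ℕ → ℝ := fun k => (ε₀ / 2) * q ^ k with hcdef
  have hcpos : ∀ k, 0 < c k := fun k => by positivity
  have hclt : ∀ k, c k < ε₀ := by
    intro k
    calc c k ≤ (ε₀ / 2) * 1 := by
          apply mul_le_mul_of_nonneg_left (pow_le_one₀ hq0.le hq1.le) (by linarith)
      _ < ε₀ := by linarith
  have hcanti : ∀ j k, j ≤ k → c k ≤ c j := by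
    intro j k hjk
    exact mul_le_mul_of_nonneg_left (pow_le_pow_of_le_one hq0.le hq1.le hjk)
      (by linarith)
  obtain ⟨t, ht0, ht1, htN, hint⟩ := hsmall (δ₀ * ε / (8 * L)) (by positivity)
    (c N) (hcpos N)
  -- find the cutoff index
  have hex : ∃ k, c k < t := by
    obtain ⟨k, hk⟩ := exists_pow_lt_of_lt_one (x := t / (ε₀ / 2)) (by positivity) hq1
    exact ⟨k, by rw [hcdef]; simp only; rw [mul_comm, ← lt_div_iff₀ (by linarith)]; exact hk⟩
  set m : ℕ := Nat.find hex with hmdef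
  have hmspec : c m < t := Nat.find_spec hex
  have hmlt : ∀ k < m, t ≤ c k := fun k hk => le_of_not_gt (Nat.find_min hex hk)
  have hNm : N < m := by
    rw [hmdef, Nat.lt_find_iff]
    intro k hk
    exact not_lt.mpr (le_trans (le_of_lt htN) (hcanti k N hk))
  obtain ⟨n, hmn⟩ : ∃ n, m = n + 1 := ⟨m - 1, by omega⟩
  have hmspec' : c (n + 1) < t := hmn ▸ hmspec
  have hNn : N ≤ n := by omega
  have hfmeas : Measurable fun r : ℝ => ENNReal.ofReal (δ r / r) :=
    (hδmeas.div measurable_id).ennreal_ofReal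
  -- per block lower bound
  have key : ∀ k, ENNReal.ofReal (δ₀ * ε / 2)
      ≤ ∫⁻ r in S ∩ Set.Ioc (c (k+1)) (c k), ENNReal.ofReal (δ r / r) := by
    intro k
    have hck := hcpos k
    have hck1 := hcpos (k+1)
    have hc1k : c (k+1) = q * c k := by rw [hcdef]; simp only; ring
    have hmem : ε * c k < (volume (S ∩ Set.Icc 0 (c k))).toReal := by
      have h := hcon (c k) hck (hclt k)
      rw [lt_div_iff₀ hck] at h; linarith
    have hsubset : S ∩ Set.Icc 0 (c k)
        ⊆ (S ∩ Set.Ioc (c (k+1)) (c k)) ∪ Set.Icc 0 (c (k+1)) := by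
      rintro r ⟨hrS, hr0, hrk⟩
      rcases le_or_gt r (c (k+1)) with h | h
      · exact Or.inr ⟨hr0, h⟩
      · exact Or.inl ⟨hrS, h, hrk⟩
    have hfin : volume (S ∩ Set.Ioc (c (k+1)) (c k)) ≠ ⊤ :=
      ne_top_of_le_ne_top (by rw [Real.volume_Ioc]; exact ENNReal.ofReal_ne_top)
        (measure_mono inter_subset_right)
    have hmub : (volume (S ∩ Set.Icc 0 (c k))).toReal
        ≤ (volume (S ∩ Set.Ioc (c (k+1)) (c k))).toReal + c (k+1) := by
      have h1 : volume (S ∩ Set.Icc 0 (c k))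
          ≤ volume (S ∩ Set.Ioc (c (k+1)) (c k)) + ENNReal.ofReal (c (k+1)) := by
        calc volume (S ∩ Set.Icc 0 (c k))
            ≤ volume ((S ∩ Set.Ioc (c (k+1)) (c k)) ∪ Set.Icc 0 (c (k+1))) :=
              measure_mono hsubset
          _ ≤ volume (S ∩ Set.Ioc (c (k+1)) (c k)) + volume (Set.Icc 0 (c (k+1))) :=
              measure_union_le _ _
          _ = volume (S ∩ Set.Ioc (c (k+1)) (c k)) + ENNReal.ofReal (c (k+1)) := by
              rw [Real.volume_Icc]; norm_num
      calc (volume (S ∩ Set.Icc 0 (c k))).toReal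
          ≤ (volume (S ∩ Set.Ioc (c (k+1)) (c k)) + ENNReal.ofReal (c (k+1))).toReal :=
            ENNReal.toReal_mono (by finiteness) h1
        _ = (volume (S ∩ Set.Ioc (c (k+1)) (c k))).toReal + c (k+1) := by
            rw [ENNReal.toReal_add hfin ENNReal.ofReal_ne_top,
              ENNReal.toReal_ofReal hck1.le]
    have hmlb : (ε/2) * c k ≤ (volume (S ∩ Set.Ioc (c (k+1)) (c k))).toReal := by
      have : c (k+1) = (ε/2) * c k := by rw [hc1k, hqdef]
      linarith
    have hμ : ENNReal.ofReal ((ε/2) * c k) ≤ volume (S ∩ Set.Ioc (c (k+1)) (c k)) :=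
      ENNReal.ofReal_le_of_le_toReal hmlb
    have hpt : ∀ r ∈ S ∩ Set.Ioc (c (k+1)) (c k),
        ENNReal.ofReal (δ₀ / c k) ≤ ENNReal.ofReal (δ r / r) := by
      rintro r ⟨⟨⟨hr0, hr1⟩, hrδ⟩, _, hrk⟩
      exact ENNReal.ofReal_le_ofReal (div_le_div₀ (le_of_lt (lt_of_le_of_lt hδ₀.le hrδ))
        (le_of_lt hrδ) hr0 hrk)
    calc ENNReal.ofReal (δ₀ * ε / 2)
        = ENNReal.ofReal (δ₀ / c k) * ENNReal.ofReal ((ε/2) * c k) := by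
          rw [← ENNReal.ofReal_mul (by positivity)]
          congr 1; field_simp
      _ ≤ ENNReal.ofReal (δ₀ / c k) * volume (S ∩ Set.Ioc (c (k+1)) (c k)) :=
          mul_le_mul_right hμ _
      _ = ∫⁻ _ in S ∩ Set.Ioc (c (k+1)) (c k), ENNReal.ofReal (δ₀ / c k) :=
          (setLIntegral_const _ _).symm
      _ ≤ _ := setLIntegral_mono hfmeas hpt
  -- blocks are pairwise disjoint
  have hdisj' : ∀ i j, i < j →
      Disjoint (S ∩ Set.Ioc (c (i+1)) (c i)) (S ∩ Set.Ioc (c (j+1)) (c j)) := by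
    intro i j hij
    apply Set.disjoint_left.mpr
    rintro r ⟨_, hi1, _⟩ ⟨_, _, hj2⟩
    exact absurd (hj2.trans (hcanti (i+1) j hij)) (not_le.mpr hi1)
  have hdisj : (↑(Finset.range n) : Set ℕ).PairwiseDisjoint
      (fun k => S ∩ Set.Ioc (c (k+1)) (c k)) := by
    intro i _ j _ hij
    rcases lt_or_gt_of_ne hij with h | h
    · exact hdisj' i j h
    · exact (hdisj' j i h).symm
  have hunion : (⋃ k ∈ Finset.range n, S ∩ Set.Ioc (c (k+1)) (c k)) ⊆ Set.Ioc t 1 := by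
    intro r hr
    simp only [Set.mem_iUnion, Finset.mem_range] at hr
    obtain ⟨k, hk, ⟨⟨hr01, _⟩, hrc, _⟩⟩ := hr
    refine ⟨lt_of_le_of_lt ?_ hrc, hr01.2⟩
    exact hmlt (k+1) (by omega)
  have hsum : (n : ENNReal) * ENNReal.ofReal (δ₀ * ε / 2)
      ≤ ∫⁻ r in Set.Ioc t 1, ENNReal.ofReal (δ r / r) := by
    calc (n : ENNReal) * ENNReal.ofReal (δ₀ * ε / 2)
        = ∑ k ∈ Finset.range n, ENNReal.ofReal (δ₀ * ε / 2) := by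
          rw [Finset.sum_const, Finset.card_range, nsmul_eq_mul]
      _ ≤ ∑ k ∈ Finset.range n,
            ∫⁻ r in S ∩ Set.Ioc (c (k+1)) (c k), ENNReal.ofReal (δ r / r) :=
          Finset.sum_le_sum (fun k _ => key k)
      _ = ∫⁻ r in ⋃ k ∈ Finset.range n, S ∩ Set.Ioc (c (k+1)) (c k),
            ENNReal.ofReal (δ r / r) :=
          (lintegral_biUnion_finset hdisj
            (fun k _ => hS.inter measurableSet_Ioc) _).symm
      _ ≤ _ := lintegral_mono_set hunion
  have hfinal := le_trans hsum hint
  have hlogt : 0 ≤ Real.log (1 / t) :=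
    Real.log_nonneg (by rw [le_div_iff₀ ht0]; linarith)
  have hreal : (n : ℝ) * (δ₀ * ε / 2) ≤ (δ₀ * ε / (8 * L)) * Real.log (1 / t) := by
    rw [← ENNReal.ofReal_natCast n, ← ENNReal.ofReal_mul (by positivity)] at hfinal
    exact (ENNReal.ofReal_le_ofReal_iff
      (mul_nonneg (by positivity) hlogt)).mp hfinal
  set A : ℝ := Real.log (2 / ε₀) with hAdef
  have hlog1 : Real.log (1 / t) ≤ A + ((n:ℝ) + 1) * L := by
    have h1 : Real.log (1 / t) ≤ Real.log (1 / c (n+1)) := by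
      apply Real.log_le_log (by positivity)
      exact one_div_le_one_div_of_le (hcpos _) hmspec'.le
    have h2 : Real.log (1 / c (n+1)) = A + ((n:ℝ) + 1) * L := by
      rw [one_div, Real.log_inv, hcdef]
      simp only
      rw [Real.log_mul (by positivity) (by positivity), Real.log_pow, hqdef,
        Real.log_div (ne_of_gt hε0) (by norm_num), hAdef,
        Real.log_div (by norm_num) (ne_of_gt hε₀0), hLdef,
        Real.log_div (by norm_num) (ne_of_gt hε0),
        Real.log_div (ne_of_gt hε₀0) (by norm_num)]
      push_cast; ring
    linarith
  -- final contradiction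
  have hB : (0:ℝ) < δ₀ * ε / (8 * L) := by positivity
  have hchain : (n : ℝ) * (δ₀ * ε / 2)
      ≤ (δ₀ * ε / (8 * L)) * (A + ((n:ℝ) + 1) * L) :=
    le_trans hreal (mul_le_mul_of_nonneg_left hlog1 hB.le)
  have h4 : 4 * (n:ℝ) * L ≤ A + ((n:ℝ) + 1) * L := by
    have hid : (δ₀ * ε / 2) = 4 * L * (δ₀ * ε / (8 * L)) := by field_simp; ring
    rw [hid] at hchain
    have := (mul_le_mul_iff_of_pos_right hB).mp (by linarith [hchain] :
      (4 * (n:ℝ) * L) * (δ₀ * ε / (8 * L)) ≤ (A + ((n:ℝ) + 1) * L) * (δ₀ * ε / (8 * L)))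
    exact this
  have hnN : (N : ℝ) ≤ (n : ℝ) := by exact_mod_cast hNn
  have hceil : A / (3 * L) ≤ (⌈A / (3 * L)⌉₊ : ℝ) := Nat.le_ceil _
  have hNval : A / (3 * L) + 1 ≤ (N : ℝ) := by
    rw [hNdef]; push_cast; linarith
  have hAid : A / (3 * L) * (3 * L) = A := div_mul_cancel₀ _ (by positivity)
  nlinarith [mul_le_mul_of_nonneg_right (hNval.trans hnN)
    (by positivity : (0:ℝ) ≤ 3 * L), hL0]

theorem extremizer_distortion_density (δ : ℝ → ℝ) (hδmeas : Measurable δ)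
    (hδnonneg : ∀ r ∈ Set.Ioc (0:ℝ) 1, 0 ≤ δ r)
    (hsmall : ∀ γ > (0:ℝ), ∀ ε > (0:ℝ), ∃ t, 0 < t ∧ t < 1 ∧ t < ε ∧
      (∫⁻ r in Set.Ioc t 1, ENNReal.ofReal (δ r / r))
        ≤ ENNReal.ofReal (γ * Real.log (1 / t))) :
    ∀ δ₀ > (0:ℝ),
      Filter.liminf
        (fun γ : ℝ =>
          (volume ({r ∈ Set.Ioc (0:ℝ) 1 | δ r > δ₀} ∩ Set.Icc 0 γ)).toReal / γ)
        (𝓝[>] (0:ℝ)) = 0 := by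
  intro δ₀ hδ₀
  set f : ℝ → ℝ := fun γ =>
    (volume ({r ∈ Set.Ioc (0:ℝ) 1 | δ r > δ₀} ∩ Set.Icc 0 γ)).toReal / γ with hfdef
  have hf0 : ∀ᶠ γ in 𝓝[>] (0:ℝ), 0 ≤ f γ := by
    filter_upwards [self_mem_nhdsWithin] with γ hγ
    exact div_nonneg ENNReal.toReal_nonneg (le_of_lt hγ)
  have hf1 : ∀ᶠ γ in 𝓝[>] (0:ℝ), f γ ≤ 1 := by
    filter_upwards [self_mem_nhdsWithin] with γ hγ
    have hγ0 : (0:ℝ) < γ := hγ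
    have hm : (volume ({r ∈ Set.Ioc (0:ℝ) 1 | δ r > δ₀} ∩ Set.Icc 0 γ)).toReal ≤ γ := by
      apply ENNReal.toReal_le_of_le_ofReal hγ0.le
      calc volume ({r ∈ Set.Ioc (0:ℝ) 1 | δ r > δ₀} ∩ Set.Icc 0 γ)
          ≤ volume (Set.Icc (0:ℝ) γ) := measure_mono inter_subset_right
        _ = ENNReal.ofReal γ := by rw [Real.volume_Icc]; norm_num
    rw [hfdef]
    exact div_le_one_of_le₀ hm hγ0.le
  have hbddge : Filter.IsBoundedUnder (· ≥ ·) (𝓝[>] (0:ℝ)) f :=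
    ⟨0, by simpa [Filter.eventually_map] using hf0⟩
  have hbddle : Filter.IsBoundedUnder (· ≤ ·) (𝓝[>] (0:ℝ)) f :=
    ⟨1, by simpa [Filter.eventually_map] using hf1⟩
  have hfreq : ∀ ε > (0:ℝ), ∃ᶠ γ in 𝓝[>] (0:ℝ), f γ ≤ ε := by
    intro ε hε
    rw [Filter.frequently_iff]
    intro U hU
    obtain ⟨u, hu, hsub⟩ := mem_nhdsGT_iff_exists_Ioo_subset.mp hU
    have hu0 : (0:ℝ) < u := hu
    obtain ⟨γ, hγ0, hγlt, hγle⟩ := extremizer_core δ hδmeas hδnonneg hsmall hδ₀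
      (lt_min hε one_half_pos) (lt_of_le_of_lt (min_le_right _ _) one_half_lt_one)
      (lt_min hu0 one_pos)
      (min_le_right _ _)
    exact ⟨γ, hsub ⟨hγ0, lt_of_lt_of_le hγlt (min_le_left _ _)⟩,
      hγle.trans (min_le_left _ _)⟩
  have hub : Filter.liminf f (𝓝[>] (0:ℝ)) ≤ 0 := by
    by_contra h
    push_neg at h
    have h2 := Filter.liminf_le_of_frequently_le (hfreq _ (half_pos h)) hbddge
    linarith [h2, h]
  have hlb : (0:ℝ) ≤ Filter.liminf f (𝓝[>] (0:ℝ)) :=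
    Filter.le_liminf_of_le (hbddle.isCoboundedUnder_ge) hf0
  exact le_antisymm hub hlb
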